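/- Let H0 and H1 be complex Hilbert spaces, r ≥ 0, δ > 0, and let A0 on H0 and A1 on H1 be bounded operators. Suppose there is λ ∈ ℂ such that A1 − λ·I is invertible (with bounded inverse), ‖A0 − λ·I‖ ≤ r, and ‖(A1 − λ·I)⁻¹‖ ≤ (r + δ)⁻¹. Then for every bounded operator Y : H0 → H1 the Sylvester equation X A0 − A1 X = Y has a unique bounded solution X, and this solution satisfies δ·‖X‖ ≤ ‖Y‖. (Bounded-operator version of Theorem 3.4 of the paper, due to Bhatia–Davis–McIntosh.) -/

import Mathlib

/-- Bounded-operator version of Theorem 3.4 of the paper (Bhatia–Davis–McIntosh):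
if for some `λ ∈ ℂ` the operator `A1 - λ` is boundedly invertible with
`‖A0 - λ‖ ≤ r` and `‖(A1 - λ)⁻¹‖ ≤ (r + δ)⁻¹`, then for every bounded `Y : H0 → H1`
the Sylvester equation `X A0 - A1 X = Y` has a unique bounded solution `X`, and this
solution satisfies `δ‖X‖ ≤ ‖Y‖`. -/
theorem sylvester_bhatia_davis_mcintosh
    {H0 : Type*} [NormedAddCommGroup H0] [InnerProductSpace ℂ H0] [CompleteSpace H0]
    {H1 : Type*} [NormedAddCommGroup H1] [InnerProductSpace ℂ H1] [CompleteSpace H1]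
    (A0 : H0 →L[ℂ] H0) (A1 : H1 →L[ℂ] H1) (r δ : ℝ) (hr : 0 ≤ r) (hδ : 0 < δ)
    (lam : ℂ) (R : H1 →L[ℂ] H1)
    (hR1 : R ∘L (A1 - lam • 1) = 1) (hR2 : (A1 - lam • 1) ∘L R = 1)
    (hA0 : ‖A0 - lam • (1 : H0 →L[ℂ] H0)‖ ≤ r)
    (hRnorm : ‖R‖ ≤ (r + δ)⁻¹)
    (Y : H0 →L[ℂ] H1) :
    (∃! X : H0 →L[ℂ] H1, X ∘L A0 - A1 ∘L X = Y) ∧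
      ∀ X : H0 →L[ℂ] H1, X ∘L A0 - A1 ∘L X = Y → δ * ‖X‖ ≤ ‖Y‖ := by
  set B0 : H0 →L[ℂ] H0 := A0 - lam • 1 with hB0
  set B1 : H1 →L[ℂ] H1 := A1 - lam • 1 with hB1
  have hrδ : 0 < r + δ := by linarith
  have hB0n : ‖B0‖ ≤ r := hA0
  -- rewrite the Sylvester equation in shifted form
  have hshift : ∀ X : H0 →L[ℂ] H1, X ∘L A0 - A1 ∘L X = X ∘L B0 - B1 ∘L X := by
    intro X
    have h1 : X ∘L (lam • (1 : H0 →L[ℂ] H0)) = (lam • (1 : H1 →L[ℂ] H1)) ∘L X := by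
      ext x; simp
    simp only [hB0, hB1, ContinuousLinearMap.comp_sub, ContinuousLinearMap.sub_comp, h1]
    abel
  -- the affine fixed-point map
  set φ : (H0 →L[ℂ] H1) → (H0 →L[ℂ] H1) := fun X => R ∘L (X ∘L B0) - R ∘L Y with hφ
  have key : ∀ X : H0 →L[ℂ] H1, (X ∘L A0 - A1 ∘L X = Y) ↔ φ X = X := by
    intro X
    rw [hshift X]
    constructor
    · intro h
      have h2 : φ X = R ∘L (B1 ∘L X) := by
        simp only [hφ, ← h, ContinuousLinearMap.comp_sub]
        abel
      rw [h2, ← ContinuousLinearMap.comp_assoc, hR1]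
      simp [ContinuousLinearMap.one_def]
    · intro h
      have h4 : B1 ∘L X = X ∘L B0 - Y := by
        conv_lhs => rw [← h]
        simp only [hφ, ContinuousLinearMap.comp_sub, ← ContinuousLinearMap.comp_assoc,
          hR2, ContinuousLinearMap.one_def, ContinuousLinearMap.id_comp]
      rw [h4]; abel
  -- any fixed point satisfies the norm bound
  have hbound : ∀ X : H0 →L[ℂ] H1, φ X = X → δ * ‖X‖ ≤ ‖Y‖ := by
    intro X h
    have h' : X = R ∘L (X ∘L B0) - R ∘L Y := by
      conv_lhs => rw [← h]
    have h1 : ‖X‖ ≤ ‖R ∘L (X ∘L B0)‖ + ‖R ∘L Y‖ := by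
      calc ‖X‖ = ‖R ∘L (X ∘L B0) - R ∘L Y‖ := by conv_lhs => rw [h']
      _ ≤ ‖R ∘L (X ∘L B0)‖ + ‖R ∘L Y‖ := norm_sub_le _ _
    have h2 : ‖R ∘L (X ∘L B0)‖ ≤ ‖R‖ * (‖X‖ * ‖B0‖) :=
      le_trans (ContinuousLinearMap.opNorm_comp_le _ _)
        (by gcongr; exact ContinuousLinearMap.opNorm_comp_le _ _)
    have h3 : ‖R ∘L Y‖ ≤ ‖R‖ * ‖Y‖ := ContinuousLinearMap.opNorm_comp_le _ _
    have e1 : ‖R‖ * (‖X‖ * ‖B0‖) ≤ (r + δ)⁻¹ * (‖X‖ * r) := by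
      gcongr
    have e2 : ‖R‖ * ‖Y‖ ≤ (r + δ)⁻¹ * ‖Y‖ := by gcongr
    have h4 : ‖X‖ ≤ (r + δ)⁻¹ * (r * ‖X‖ + ‖Y‖) := by
      have : ‖X‖ ≤ (r + δ)⁻¹ * (‖X‖ * r) + (r + δ)⁻¹ * ‖Y‖ := by linarith
      calc ‖X‖ ≤ (r + δ)⁻¹ * (‖X‖ * r) + (r + δ)⁻¹ * ‖Y‖ := this
      _ = (r + δ)⁻¹ * (r * ‖X‖ + ‖Y‖) := by ring
    have h5 := mul_le_mul_of_nonneg_left h4 hrδ.le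
    rw [← mul_assoc, mul_inv_cancel₀ hrδ.ne', one_mul] at h5
    nlinarith [norm_nonneg X]
  -- contraction
  have hk : (r / (r + δ)) < 1 := by
    rw [div_lt_one hrδ]; linarith
  have hk0 : 0 ≤ r / (r + δ) := div_nonneg hr hrδ.le
  have hcontr : ContractingWith ⟨r / (r + δ), hk0⟩ φ := by
    constructor
    · exact_mod_cast hk
    · apply LipschitzWith.of_dist_le_mul
      intro X X'
      rw [dist_eq_norm, dist_eq_norm]; change _ ≤ r / (r + δ) * _
      have hd : φ X - φ X' = R ∘L ((X - X') ∘L B0) := by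
        simp only [hφ, ContinuousLinearMap.comp_sub, ContinuousLinearMap.sub_comp]
        abel
      rw [hd]
      have h2 : ‖R ∘L ((X - X') ∘L B0)‖ ≤ ‖R‖ * (‖X - X'‖ * ‖B0‖) :=
        le_trans (ContinuousLinearMap.opNorm_comp_le _ _)
          (by gcongr; exact ContinuousLinearMap.opNorm_comp_le _ _)
      have h3 : ‖R‖ * (‖X - X'‖ * ‖B0‖) ≤ (r + δ)⁻¹ * (‖X - X'‖ * r) := by
        gcongr
      calc ‖R ∘L ((X - X') ∘L B0)‖ ≤ (r + δ)⁻¹ * (‖X - X'‖ * r) := le_trans h2 h3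
        _ = r / (r + δ) * ‖X - X'‖ := by ring
  have hfix := hcontr.fixedPoint_isFixedPt
  refine ⟨⟨ContractingWith.fixedPoint φ hcontr, ?_, ?_⟩, fun X hX => hbound X ((key X).mp hX)⟩
  · exact (key _).mpr hfix
  · intro X hX
    exact hcontr.fixedPoint_unique ((key X).mp hX)
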